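/- Fix a tent map kneading sequence ν and a left-infinite sequence L = …l_2l_1, and let a_n…a_1 be an admissible finite word. If ←x = …x_2x_1 is admissible and there exists n such that …x_{n+2}x_{n+1} = …l_{n+2}l_{n+1}, then: if #_1(x_n…x_1) and #_1(l_n…l_1) have the same parity, ←x is the largest element (w.r.t. ≺_L) of the cylinder [x_n…x_1], and otherwise ←x is the smallest element of [x_n…x_1]. -/

import Mathlib

/-- number of `true`s among `s 0, …, s (k-1)` (i.e. `#₁(s_k … s_1)` for a
left-infinite sequence `…s₂s₁` coded by `s : ℕ → Bool` with `s 0 = s₁`). -/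
def cnt (s : ℕ → Bool) (k : ℕ) : ℕ :=
  ((Finset.range k).filter (fun i => s i = true)).card

/-- parity-lexicographic strict order on finite binary words. -/
def plLt (s t : List Bool) : Prop :=
  ∃ k, k < s.length ∧ k < t.length ∧ s.take k = t.take k ∧
    s.getD k false ≠ t.getD k false ∧
    ((s.getD k false = false ∧ Even ((s.take k).count true)) ∨
     (s.getD k false = true ∧ Odd ((s.take k).count true)))

def plLe (s t : List Bool) : Prop := s = t ∨ plLt s t

/-- the word `c_{start+1} … c_{start+len}` of the kneading sequence `ν`
(where `c_{i+1} = ν i`). -/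
def nuWord (ν : ℕ → Bool) (start len : ℕ) : List Bool :=
  (List.range len).map (fun j => ν (start + j))

/-- `a = a₁…a_n` is admissible w.r.t. the kneading sequence `ν`:
`c₂…c_{2+n-i} ⪯ a_i…a_n ⪯ c₁…c_{1+n-i}` for all `i`. -/
def AdmissibleWord (ν : ℕ → Bool) (a : List Bool) : Prop :=
  ∀ i, i < a.length →
    plLe (nuWord ν 1 (a.length - i)) (a.drop i) ∧
    plLe (a.drop i) (nuWord ν 0 (a.length - i))

/-- `ν` is an admissible kneading sequence: all of its finite subwords are admissible. -/
def AdmissibleSeq (ν : ℕ → Bool) : Prop :=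
  ∀ k len, AdmissibleWord ν (nuWord ν k len)

/-- the finite subword `s_{k+len} … s_{k+1}` (read forward in time, i.e. with
decreasing index) of the left-infinite sequence `…s₂s₁` coded by `s` (`s 0 = s₁`). -/
def leftWord (s : ℕ → Bool) (k len : ℕ) : List Bool :=
  ((List.range len).map (fun j => s (k + j))).reverse

/-- a left-infinite sequence is admissible iff all of its finite subwords are. -/
def AdmissibleLeft (ν : ℕ → Bool) (s : ℕ → Bool) : Prop :=
  ∀ k len, AdmissibleWord ν (leftWord s k len)

/-- the order `≺_L` on left-infinite sequences determined by `L = …l₂l₁`. -/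
def ltL (L s t : ℕ → Bool) : Prop :=
  ∃ k, (∀ i, i < k → s i = t i) ∧ s k ≠ t k ∧
    ((t k = L k ∧ Even (cnt s k + cnt L k)) ∨
     (s k = L k ∧ ¬ Even (cnt s k + cnt L k)))

lemma cnt_add (s : ℕ → Bool) {n k : ℕ} (h : n ≤ k) :
    cnt s k = cnt s n + ((Finset.Ico n k).filter (fun i => s i = true)).card := by
  unfold cnt
  rw [Finset.range_eq_Ico, ← Finset.Ico_union_Ico_eq_Ico (Nat.zero_le n) h,
    Finset.filter_union,
    Finset.card_union_of_disjoint
      (Finset.disjoint_filter_filter (Finset.Ico_disjoint_Ico_consecutive 0 n k)), Finset.range_eq_Ico]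

/-- If the admissible left-infinite sequence `←x` has the same tail as `L` from
index `n` on, then `←x` is the largest element (w.r.t. `≺_L`) of the cylinder
`[x_n…x_1]` when `#₁(x_n…x_1)` and `#₁(l_n…l_1)` have the same parity, and the
smallest otherwise. -/
theorem tail_of_L_is_extremum (ν L x : ℕ → Bool) (hν : AdmissibleSeq ν)
    (hL : AdmissibleLeft ν L) (hx : AdmissibleLeft ν x)
    (n : ℕ) (htail : ∀ k, n ≤ k → x k = L k) :
    (Even (cnt x n + cnt L n) →
      ∀ t, AdmissibleLeft ν t → (∀ i, i < n → t i = x i) → t = x ∨ ltL L t x) ∧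
    (¬ Even (cnt x n + cnt L n) →
      ∀ t, AdmissibleLeft ν t → (∀ i, i < n → t i = x i) → t = x ∨ ltL L x t) := by
  classical
  have key : ∀ t : ℕ → Bool, (∀ i, i < n → t i = x i) → t ≠ x →
      ∃ k, n ≤ k ∧ (∀ i, i < k → t i = x i) ∧ t k ≠ x k ∧ x k = L k ∧
        cnt t k = cnt x k ∧
        (Even (cnt x k + cnt L k) ↔ Even (cnt x n + cnt L n)) := by
    intro t hlt hne
    have hex : ∃ k, t k ≠ x k := by
      by_contra h; push_neg at h; exact hne (funext h)
    set k := Nat.find hex with hkdef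
    have hk : t k ≠ x k := Nat.find_spec hex
    have hmin : ∀ i, i < k → t i = x i := by
      intro i hi
      by_contra h
      exact absurd (Nat.find_le h) (not_le.mpr hi)
    have hnk : n ≤ k := by
      by_contra h; push_neg at h
      exact hk (hlt k h)
    have hxL : x k = L k := htail k hnk
    have hct : cnt t k = cnt x k := by
      unfold cnt
      congr 1
      apply Finset.filter_congr
      intro i hi
      simp [hmin i (Finset.mem_range.mp hi)]
    refine ⟨k, hnk, hmin, hk, hxL, hct, ?_⟩
    have hfilt : ((Finset.Ico n k).filter (fun i => x i = true)).card =
        ((Finset.Ico n k).filter (fun i => L i = true)).card := by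
      congr 1
      apply Finset.filter_congr
      intro i hi
      simp [htail i (Finset.mem_Ico.mp hi).1]
    rw [cnt_add x hnk, cnt_add L hnk, hfilt, Nat.even_iff, Nat.even_iff]
    omega
  constructor
  · intro he t _ hlt
    by_cases hne : t = x
    · exact Or.inl hne
    · right
      obtain ⟨k, _, hmin, hk, hxL, hct, hiff⟩ := key t hlt hne
      exact ⟨k, hmin, hk, Or.inl ⟨hxL.symm ▸ hxL, by rw [hct]; exact hiff.mpr he⟩⟩
  · intro he t _ hlt
    by_cases hne : t = x
    · exact Or.inl hne
    · right
      obtain ⟨k, _, hmin, hk, hxL, hct, hiff⟩ := key t hlt hne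
      refine ⟨k, fun i hi => (hmin i hi).symm, fun h => hk h.symm,
        Or.inr ⟨hxL, fun h => he (hiff.mp h)⟩⟩
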